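/- Let M be a compact smooth manifold without boundary of dimension m, let E be a finite-dimensional real normed vector space, and let A ⊆ E be a linear subspace with m + dim A < dim E. Let f : M → E be a smooth map. Then for every ε > 0 there exists c ∈ E with ‖c‖ < ε such that f(x) + c ∉ A for all x ∈ M. In particular, smooth maps whose image is disjoint from A are dense among smooth maps M → E. -/

import Mathlib

open Manifold Set MeasureTheory

/-- A continuous linear surjection exists onto any space of no larger dimension. -/
lemma exists_clm_surjective (V W : Type*) [NormedAddCommGroup V] [NormedSpace ℝ V]
    [FiniteDimensional ℝ V] [NormedAddCommGroup W] [NormedSpace ℝ W] [FiniteDimensional ℝ W]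
    (h : Module.finrank ℝ W ≤ Module.finrank ℝ V) :
    ∃ π : V →L[ℝ] W, Function.Surjective π := by
  classical
  let bV := Module.finBasis ℝ V
  let bW := Module.finBasis ℝ W
  let π₀ : V →ₗ[ℝ] W := bV.constr ℝ
    (fun i => if hi : (i : ℕ) < Module.finrank ℝ W then bW ⟨i, hi⟩ else 0)
  have hsurj : Function.Surjective π₀ := by
    rw [← LinearMap.range_eq_top, eq_top_iff, ← bW.span_eq, Submodule.span_le]
    rintro w ⟨j, rfl⟩
    refine ⟨bV (Fin.castLE h j), ?_⟩
    have := bV.constr_basis ℝ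
      (fun i => if hi : (i : ℕ) < Module.finrank ℝ W then bW ⟨i, hi⟩ else 0) (Fin.castLE h j)
    rw [this, dif_pos (show ((Fin.castLE h j : Fin _) : ℕ) < Module.finrank ℝ W from j.isLt)]
    exact congrArg bW (Fin.ext rfl)
  exact ⟨LinearMap.toContinuousLinearMap π₀, hsurj⟩


/-- Density of maps avoiding a small subspace: if `M` is a compact smooth
boundaryless manifold of dimension `m`, `A ⊆ E` a linear subspace with
`m + dim A < dim E`, and `f : M → E` smooth, then arbitrarily small translations
of `f` avoid `A`. -/
theorem exists_small_translation_avoiding_subspace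
    {F : Type*} [NormedAddCommGroup F] [NormedSpace ℝ F] [FiniteDimensional ℝ F]
    {H : Type*} [TopologicalSpace H] (I : ModelWithCorners ℝ F H) [I.Boundaryless]
    {M : Type*} [TopologicalSpace M] [ChartedSpace H M] [IsManifold I (⊤ : ℕ∞) M]
    [CompactSpace M]
    {E : Type*} [NormedAddCommGroup E] [NormedSpace ℝ E] [FiniteDimensional ℝ E]
    (A : Submodule ℝ E)
    (hdim : Module.finrank ℝ F + Module.finrank ℝ A < Module.finrank ℝ E)
    (f : M → E) (hf : ContMDiff I 𝓘(ℝ, E) (⊤ : ℕ∞) f) :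
    ∀ ε : ℝ, 0 < ε → ∃ c : E, ‖c‖ < ε ∧ ∀ x : M, f x + c ∉ A := by
  intro ε hε
  borelize E
  set μ : Measure E := (Module.finBasis ℝ E).addHaar with hμ
  -- the bad set
  set S : Set E := {c : E | ∃ x : M, f x + c ∈ A} with hS
  -- a surjection π : E → F × A
  have hle : Module.finrank ℝ (F × A) ≤ Module.finrank ℝ E := by
    rw [Module.finrank_prod]; exact hdim.le
  obtain ⟨π, hπ⟩ := exists_clm_surjective E (F × A) hle
  -- per-chart bad sets have measure zero
  have key : ∀ x₀ : M, μ {c : E | ∃ x ∈ (chartAt H x₀).source, f x + c ∈ A} = 0 := by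
    intro x₀
    set φ := extChartAt I x₀ with hφ
    have hsrc : φ.source = (chartAt H x₀).source := extChartAt_source I x₀
    -- f in the chart
    have hg : ContDiffOn ℝ (⊤ : ℕ∞) (f ∘ φ.symm) φ.target := by
      have h2 : ContMDiffOn 𝓘(ℝ, F) 𝓘(ℝ, E) ((⊤ : ℕ∞) : WithTop ℕ∞) (f ∘ φ.symm) φ.target :=
        (hf.contMDiffOn (s := univ)).comp (contMDiffOn_extChartAt_symm x₀)
          (fun y _ => mem_univ _)
      exact_mod_cast contMDiffOn_iff_contDiffOn.1 h2
    set g : F → E := f ∘ φ.symm with hgdef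
    set T : Set (F × A) := φ.target ×ˢ (univ : Set A) with hT
    set G : F × A → E := fun p => (p.2 : E) - g p.1 with hG
    have hGdiff : DifferentiableOn ℝ G T := by
      apply DifferentiableOn.sub
      · exact (A.subtypeL.differentiable.comp differentiable_snd).differentiableOn
      · exact (hg.differentiableOn (by simp)).comp differentiable_fst.differentiableOn
          (fun p hp => hp.1)
    set s : Set E := π ⁻¹' T with hs
    set D : E → E →L[ℝ] E := fun e => (fderivWithin ℝ G T (π e)).comp π with hD
    have hder : ∀ e ∈ s, HasFDerivWithinAt (G ∘ π) (D e) s e := by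
      intro e he
      exact ((hGdiff (π e) he).hasFDerivWithinAt).comp e
        (π.hasFDerivWithinAt) (fun y hy => hy)
    have hdet : ∀ e ∈ s, (D e).det = 0 := by
      intro e he
      by_contra h0
      have hsurjD : Function.Surjective (D e) :=
        (LinearMap.equivOfDetNeZero _ h0).surjective
      have h1 : Module.finrank ℝ (LinearMap.range (D e : E →ₗ[ℝ] E)) ≤
          Module.finrank ℝ (F × A) := by
        have : LinearMap.range ((D e : E →ₗ[ℝ] E)) ≤
            LinearMap.range ((fderivWithin ℝ G T (π e) : (F × A) →ₗ[ℝ] E)) := by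
          rintro y ⟨z, rfl⟩
          exact ⟨π z, rfl⟩
        exact le_trans (Submodule.finrank_mono this)
          (LinearMap.finrank_range_le _)
      have h2 : LinearMap.range ((D e : E →ₗ[ℝ] E)) = ⊤ :=
        LinearMap.range_eq_top.2 hsurjD
      rw [h2, finrank_top] at h1
      rw [Module.finrank_prod] at h1
      omega
    have himg : μ ((G ∘ π) '' s) = 0 :=
      addHaar_image_eq_zero_of_det_fderivWithin_eq_zero μ hder hdet
    refine measure_mono_null ?_ himg
    rintro c ⟨x, hx, hxc⟩
    obtain ⟨e, he⟩ := hπ (φ x, (⟨f x + c, hxc⟩ : A))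
    have hxT : φ x ∈ φ.target := by
      apply PartialEquiv.map_source
      rw [hsrc]; exact hx
    refine ⟨e, ?_, ?_⟩
    · show π e ∈ T
      rw [he]; exact ⟨hxT, mem_univ _⟩
    · show G (π e) = c
      rw [he]
      have : g (φ x) = f x := by
        show f (φ.symm (φ x)) = f x
        rw [φ.left_inv (by rw [hsrc]; exact hx)]
      simp [hG, this]
  -- cover M by finitely many charts
  obtain ⟨t, ht⟩ : ∃ t : Finset M, univ ⊆ ⋃ x ∈ t, (chartAt H x).source := by
    exact isCompact_univ.elim_finite_subcover (fun x : M => (chartAt H x).source)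
      (fun x => (chartAt H x).open_source)
      (fun x _ => mem_iUnion.2 ⟨x, mem_chart_source H x⟩)
  have hSsub : S ⊆ ⋃ i ∈ t, {c : E | ∃ x ∈ (chartAt H i).source, f x + c ∈ A} := by
    rintro c ⟨x, hx⟩
    obtain ⟨i, hi, hxi⟩ := by
      have := ht (mem_univ x)
      simpa using this
    exact mem_iUnion.2 ⟨i, mem_iUnion.2 ⟨hi, ⟨x, hxi, hx⟩⟩⟩
  have hSzero : μ S = 0 := by
    refine measure_mono_null hSsub ?_
    refine le_antisymm ?_ zero_le
    calc μ (⋃ i ∈ t, {c : E | ∃ x ∈ (chartAt H i).source, f x + c ∈ A})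
        ≤ ∑ i ∈ t, μ {c : E | ∃ x ∈ (chartAt H i).source, f x + c ∈ A} :=
          measure_biUnion_finset_le t _
      _ = 0 := by simp [key]
  -- the ball has positive measure
  have hball : 0 < μ (Metric.ball (0 : E) ε) := by
    have hnt : Nontrivial E :=
      Module.nontrivial_of_finrank_pos (R := ℝ) (M := E) (by omega)
    exact Metric.measure_ball_pos μ 0 hε
  have : ¬ Metric.ball (0 : E) ε ⊆ S := by
    intro hsub
    exact absurd (measure_mono_null hsub hSzero) hball.ne'
  obtain ⟨c, hc, hcS⟩ := not_subset.1 this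
  exact ⟨c, mem_ball_zero_iff.1 hc, fun x hx => hcS ⟨x, hx⟩⟩
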